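/- arXiv:2110.14400 — 3 statements merged into one kernel-verified Lean document; each statement's English description precedes it below -/
import Mathlib

section
/- Let S be a semigroup, a ∈ S, and suppose: (1) T := {σ ∈ S : σaσ = σ} is nonempty, (2) aτa = a for every τ ∈ S. Then in the variant S^a (operation x ⋆ y = xay), the map φ : S → S, φ(ξ) = ξ ⋆ ξ = ξaξ, satisfies φ(σ) = σ for σ ∈ T, φ(ξ) ∈ T for all ξ ∈ S, and σ ⋆ τ = φ(σ) ⋆ φ(τ) for all σ, τ ∈ S. Thus S^a is an inflation of T along φ. -/
/-- Suppose `T = {σ | σ*a*σ = σ}` is nonempty and `a*τ*a = a` for all `τ`. Then in the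
variant `S^a`, the map `φ ξ = ξ*a*ξ` fixes `T` pointwise, maps into `T`, and satisfies
`σ ⋆ τ = φ σ ⋆ φ τ`; thus `S^a` is an inflation of `T` along `φ`. -/
theorem variant_inflation_of_sandwich_regulars {S : Type*} [Semigroup S] (a : S)
    (hT : ∃ σ : S, σ * a * σ = σ)
    (ha : ∀ τ : S, a * τ * a = a) :
    (∀ σ ∈ {σ : S | σ * a * σ = σ}, σ * a * σ = σ) ∧
    (∀ ξ : S, (ξ * a * ξ) * a * (ξ * a * ξ) = ξ * a * ξ) ∧
    (∀ σ τ : S, σ * a * τ = (σ * a * σ) * a * ((τ * a * τ))) := by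
  have ha' : ∀ τ : S, a * (τ * a) = a := fun τ => by rw [← mul_assoc]; exact ha τ
  have key : ∀ x y : S, a * (x * (a * y)) = a * y := fun x y => by
    rw [← mul_assoc, ← mul_assoc, ha]
  refine ⟨fun σ h => h, fun ξ => ?_, fun σ τ => ?_⟩ <;>
    simp only [mul_assoc, ha', ha, key]
end

section
/- Let n, k, r, q ∈ ℕ with n ≥ k ≥ r ≥ q ≥ 1, n ≡ k (mod 2), and n ≥ k + 2. Then μ(n,k,r,q) > μ(n,k+2,r,q), where μ(n,k,r,q) is the number of PB-pairs (η,X) on {1,…,n} with |X| = q whose join with (ε_{n,k},{1,…,r}) has rank q. -/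
/-- An equivalence is a 1-2-equivalence if every class has size at most 2. -/
def IsOneTwo {T : Type*} (ε : Setoid T) : Prop :=
  ∀ x : T, ({y : T | ε.r x y}).ncard ≤ 2

/-- A PB-pair: a 1-2-equivalence together with a set of elements lying in
singleton classes. -/
def IsPBPair {T : Type*} (ε : Setoid T) (X : Set T) : Prop :=
  IsOneTwo ε ∧ ∀ x ∈ X, ∀ y : T, ε.r x y → y = x

/-- The rank of the join of two PB-pairs: the number of pairs `(x, y) ∈ X₁ × X₂`
lying in a common class of the join `ε₁ ⊔ ε₂` of the equivalences. -/
noncomputable def joinRank {T : Type*} (ε₁ : Setoid T) (X₁ : Set T)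
    (ε₂ : Setoid T) (X₂ : Set T) : ℕ :=
  {p : T × T | p.1 ∈ X₁ ∧ p.2 ∈ X₂ ∧ (ε₁ ⊔ ε₂).r p.1 p.2}.ncard

/-- The 1-2-equivalence `ε_{n,k}` on `{0,…,n-1}` with singleton classes
`{0},…,{k-1}` and doubleton classes `{k,k+1}, {k+2,k+3}, …`. -/
def epsNK (n k : ℕ) : Setoid (Fin n) where
  r x y := x = y ∨ (k ≤ x.val ∧ k ≤ y.val ∧ (x.val - k) / 2 = (y.val - k) / 2)
  iseqv := by
    constructor
    · exact fun x => Or.inl rfl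
    · rintro x y (rfl | ⟨h1, h2, h3⟩)
      · exact Or.inl rfl
      · exact Or.inr ⟨h2, h1, h3.symm⟩
    · rintro x y z (rfl | ⟨h1, h2, h3⟩) h
      · exact h
      · rcases h with rfl | ⟨h4, h5, h6⟩
        · exact Or.inr ⟨h1, h2, h3⟩
        · exact Or.inr ⟨h1, h5, h3.trans h6⟩

/-- The domain `[r] = {0,…,r-1}` inside `Fin n`. -/
def domSet (n r : ℕ) : Set (Fin n) := {x : Fin n | x.val < r}

/-- `mu n k r q` is the number of PB-pairs `(η, X)` on an `n`-set with `|X| = q`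
whose join with `(ε_{n,k}, [r])` has rank `q`; it is `0` if `(ε_{n,k}, [r])` is not
a well-defined PB-pair (i.e. unless `n ≥ k ≥ r` and `n ≡ k (mod 2)`). -/
noncomputable def mu (n k r q : ℕ) : ℕ :=
  if k ≤ n ∧ r ≤ k ∧ n % 2 = k % 2 then
    {p : Setoid (Fin n) × Set (Fin n) |
      IsPBPair p.1 p.2 ∧ p.2.ncard = q ∧
      joinRank (epsNK n k) (domSet n r) p.1 p.2 = q}.ncard
  else 0


lemma setoid_finite {α : Type*} [Finite α] : Finite (Setoid α) := by
  have : Function.Injective (fun s : Setoid α => s.r) := by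
    intro s t h
    exact Setoid.ext fun a b => by rw [show s.r = t.r from h]
  exact Finite.of_injective _ this

lemma sup_r_iff {α : Type*} (σ τ : Setoid α) (a b : α) :
    (σ ⊔ τ).r a b ↔ Relation.ReflTransGen (fun u v => σ.r u v ∨ τ.r u v) a b := by
  set st : α → α → Prop := fun u v => σ.r u v ∨ τ.r u v with hst
  have hsymm : ∀ u v, st u v → st v u := by
    rintro u v (h | h)
    · exact Or.inl (σ.symm h)
    · exact Or.inr (τ.symm h)
  let J : Setoid α :=
    ⟨fun u v => Relation.ReflTransGen st u v,
     ⟨fun _ => .refl,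
      fun h => by
        induction h with
        | refl => exact .refl
        | tail _ hst ih => exact Relation.ReflTransGen.trans (.single (hsymm _ _ hst)) ih,
      fun h1 h2 => h1.trans h2⟩⟩
  constructor
  · intro h
    have hle : σ ⊔ τ ≤ J := by
      apply sup_le
      · exact Setoid.le_def.mpr fun h => Relation.ReflTransGen.single (Or.inl h)
      · exact Setoid.le_def.mpr fun h => Relation.ReflTransGen.single (Or.inr h)
    exact Setoid.le_def.mp hle h
  · intro h
    induction h with
    | refl => exact (σ ⊔ τ).refl a
    | tail _ hst ih =>
        refine (σ ⊔ τ).trans ih ?_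
        rcases hst with h | h
        · exact Setoid.le_def.mp le_sup_left h
        · exact Setoid.le_def.mp le_sup_right h

open Classical in
noncomputable def part {n : ℕ} (σ : Setoid (Fin n)) (x : Fin n) : Fin n :=
  if h : ∃ y, σ.r x y ∧ y ≠ x then h.choose else x

lemma part_rel {n : ℕ} (σ : Setoid (Fin n)) (x : Fin n) : σ.r x (part σ x) := by
  unfold part
  split
  next h => exact h.choose_spec.1
  next h => exact σ.refl x

lemma rel_part {n : ℕ} {σ : Setoid (Fin n)} (hσ : IsOneTwo σ) {x y : Fin n}
    (h : σ.r x y) : y = x ∨ y = part σ x := by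
  by_cases hyx : y = x
  · exact Or.inl hyx
  have hex : ∃ y, σ.r x y ∧ y ≠ x := ⟨y, h, hyx⟩
  have hp : part σ x = hex.choose := by
    unfold part
    rw [dif_pos hex]
  by_contra hcon
  push_neg at hcon
  have hpy : y ≠ part σ x := hcon.2
  have hpx : hex.choose ≠ x := hex.choose_spec.2
  have hsub : ({x, y, hex.choose} : Set (Fin n)) ⊆ {z | σ.r x z} := by
    intro z hz
    simp only [Set.mem_insert_iff, Set.mem_singleton_iff] at hz
    rcases hz with h1 | h1 | h1
    · rw [h1]; exact σ.refl x
    · rw [h1]; exact h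
    · rw [h1]; exact hex.choose_spec.1
  have h3 : ({x, y, hex.choose} : Set (Fin n)).ncard = 3 := by
    rw [Set.ncard_eq_three]
    refine ⟨x, y, hex.choose, Ne.symm hyx, Ne.symm hpx, fun e => hpy (e.trans hp.symm), rfl⟩
  have := Set.ncard_le_ncard hsub (Set.toFinite _)
  have h2 := hσ x
  omega

lemma part_part {n : ℕ} {σ : Setoid (Fin n)} (hσ : IsOneTwo σ) (x : Fin n) :
    part σ (part σ x) = x := by
  by_cases h : part σ x = x
  · rw [h, h]
  · rcases rel_part hσ (σ.symm (part_rel σ x)) with h1 | h1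
    · exact absurd h1.symm h
    · exact h1.symm

/-- the alternating walk -/
def walkF {n : ℕ} (e h : Fin n → Fin n) (y : Fin n) : ℕ → Fin n
  | 0 => y
  | (t+1) => if Even t then e (walkF e h y t) else h (walkF e h y t)


lemma walk_succ {n : ℕ} (e h : Fin n → Fin n) (y : Fin n) (t : ℕ) :
    walkF e h y (t+1) = if Even t then e (walkF e h y t) else h (walkF e h y t) := rfl

lemma walk_e {n : ℕ} (e h : Fin n → Fin n) (y : Fin n)
    (he : ∀ x, e (e x) = x) (t : ℕ) :
    ∃ s, walkF e h y s = e (walkF e h y t) := by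
  match t with
  | 0 => exact ⟨1, by simp [walk_succ]⟩
  | (m+1) =>
    by_cases hm : Even m
    · refine ⟨m, ?_⟩
      rw [walk_succ, if_pos hm, he]
    · refine ⟨m+2, ?_⟩
      rw [walk_succ e h y (m+1), if_pos (by simpa [Nat.even_add_one] using hm)]

lemma walk_h {n : ℕ} (e h : Fin n → Fin n) (y : Fin n)
    (hh : ∀ x, h (h x) = x) (hy : h y = y) (t : ℕ) :
    ∃ s, walkF e h y s = h (walkF e h y t) := by
  match t with
  | 0 => exact ⟨0, by simp [walkF, hy]⟩
  | (m+1) =>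
    by_cases hm : Even m
    · refine ⟨m+2, ?_⟩
      rw [walk_succ e h y (m+1), if_neg (by simpa [Nat.even_add_one] using hm)]
    · refine ⟨m, ?_⟩
      rw [walk_succ, if_neg hm, hh]

lemma walk_closure {n : ℕ} (e h : Fin n → Fin n) (y : Fin n)
    (he : ∀ x, e (e x) = x) (hh : ∀ x, h (h x) = x) (hy : h y = y) (z : Fin n)
    (hz : Relation.ReflTransGen (fun a b => b = a ∨ b = e a ∨ b = h a) y z) :
    ∃ t, walkF e h y t = z := by
  induction hz with
  | refl => exact ⟨0, rfl⟩
  | tail _ hst ih =>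
      obtain ⟨t, ht⟩ := ih
      rcases hst with rfl | rfl | rfl
      · exact ⟨t, ht⟩
      · obtain ⟨s, hs⟩ := walk_e e h y he t
        exact ⟨s, by rw [hs, ht]⟩
      · obtain ⟨s, hs⟩ := walk_h e h y hh hy t
        exact ⟨s, by rw [hs, ht]⟩

lemma walk_reflect {n : ℕ} (e h : Fin n → Fin n) (y : Fin n)
    (he : ∀ x, e (e x) = x) (hh : ∀ x, h (h x) = x) (j : ℕ) (hje : Even j)
    (hb : walkF e h y (j+1) = walkF e h y j) :
    ∀ t, t ≤ j → walkF e h y (j+1+t) = walkF e h y (j-t) := by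
  intro t
  induction t with
  | zero => simpa using hb
  | succ t ih =>
      intro htj
      have ih' := ih (by omega)
      have h1 : j+1+(t+1) = (j+1+t)+1 := by omega
      have h2 : j - t = (j-(t+1))+1 := by omega
      obtain ⟨c, hc⟩ := hje
      have hpar1 : Even (j+1+t) ↔ ¬ Even t := by
        simp only [Nat.even_iff, hc]
        omega
      have hpar2 : Even (j-(t+1)) ↔ ¬ Even t := by
        simp only [Nat.even_iff, hc]
        omega
      rw [h1, walk_succ]
      rw [h2, walk_succ] at ih'
      by_cases het : Even t
      · rw [if_neg (by rw [hpar1]; tauto), ih', if_neg (by rw [hpar2]; tauto), hh]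
      · rw [if_pos (hpar1.mpr het), ih', if_pos (hpar2.mpr het), he]

lemma walk_period {n : ℕ} (e h : Fin n → Fin n) (y : Fin n)
    (he : ∀ x, e (e x) = x) (hh : ∀ x, h (h x) = x) (hy : h y = y) (j : ℕ) (hje : Even j)
    (hb : walkF e h y (j+1) = walkF e h y j) :
    ∀ t, walkF e h y (2*j+2+t) = walkF e h y t := by
  have base : walkF e h y (2*j+2) = walkF e h y 0 := by
    have h1 : walkF e h y (2*j+1) = walkF e h y 0 := by
      have := walk_reflect e h y he hh j hje hb j le_rfl
      simpa [show j+1+j = 2*j+1 from by omega] using this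
    have h2 : walkF e h y (2*j+2) = h (walkF e h y (2*j+1)) := by
      rw [walk_succ, if_neg (by simp [Nat.even_add_one, parity_simps])]
    rw [h2, h1]
    show h y = y
    exact hy
  intro t
  induction t with
  | zero => simpa using base
  | succ t ih =>
      have h1 : 2*j+2+(t+1) = (2*j+2+t)+1 := by omega
      have hpar : Even (2*j+2+t) ↔ Even t := by
        rw [Nat.even_add]
        simp [parity_simps]
      rw [h1, walk_succ, walk_succ e h y t, ih]
      by_cases het : Even t
      · rw [if_pos (hpar.mpr het), if_pos het]
      · rw [if_neg (fun c => het (hpar.mp c)), if_neg het]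

lemma walk_allvals {n : ℕ} (e h : Fin n → Fin n) (y : Fin n)
    (he : ∀ x, e (e x) = x) (hh : ∀ x, h (h x) = x) (hy : h y = y) (j : ℕ) (hje : Even j)
    (hb : walkF e h y (j+1) = walkF e h y j) :
    ∀ t, ∃ s, s ≤ j ∧ walkF e h y t = walkF e h y s := by
  intro t
  induction t using Nat.strong_induction_on with
  | _ t ih =>
    by_cases h1 : t ≤ j
    · exact ⟨t, h1, rfl⟩
    by_cases h2 : t ≤ 2*j+1
    · have hs' : t - (j+1) ≤ j := by omega
      have heq : j+1+(t-(j+1)) = t := by omega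
      refine ⟨j - (t-(j+1)), by omega, ?_⟩
      have hr := walk_reflect e h y he hh j hje hb _ hs'
      rw [heq] at hr
      exact hr
    · have heq : 2*j+2+(t-(2*j+2)) = t := by omega
      have hper := walk_period e h y he hh hy j hje hb (t-(2*j+2))
      rw [heq] at hper
      obtain ⟨s, hs, hv⟩ := ih (t-(2*j+2)) (by omega)
      exact ⟨s, hs, hper.trans hv⟩

lemma invol_unique {n : ℕ} (e h : Fin n → Fin n)
    (he : ∀ x, e (e x) = x) (hh : ∀ x, h (h x) = x) (y : Fin n) (hy : h y = y)
    (z1 z2 : Fin n)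
    (h1 : Relation.ReflTransGen (fun a b => b = a ∨ b = e a ∨ b = h a) y z1)
    (h2 : Relation.ReflTransGen (fun a b => b = a ∨ b = e a ∨ b = h a) y z2)
    (e1 : e z1 = z1) (e2 : e z2 = z2) : z1 = z2 := by
  have ex1 := walk_closure e h y he hh hy z1 h1
  have ex2 := walk_closure e h y he hh hy z2 h2
  have key : ∀ (w1 w2 : Fin n) (hx1 : ∃ t, walkF e h y t = w1) (hx2 : ∃ t, walkF e h y t = w2),
      e w1 = w1 → e w2 = w2 → Nat.find hx2 ≤ Nat.find hx1 := by
    intro w1 w2 hx1 hx2 ew1 ew2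
    set j1 := Nat.find hx1 with hj1def
    have hspec1 : walkF e h y j1 = w1 := Nat.find_spec hx1
    have hjeven : Even j1 := by
      by_contra hodd
      obtain ⟨c, hc⟩ := Nat.not_even_iff_odd.mp hodd
      have hm : walkF e h y j1 = e (walkF e h y (2*c)) := by
        rw [hc]
        rw [walk_succ, if_pos (by simp [parity_simps])]
      have h5 : walkF e h y (2*c) = e w1 := by
        rw [← hspec1, hm, he]
      have h6 : walkF e h y (2*c) = w1 := by rw [h5, ew1]
      exact Nat.find_min hx1 (by omega) h6
    have hbounce : walkF e h y (j1+1) = walkF e h y j1 := by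
      rw [walk_succ, if_pos hjeven, hspec1, ew1]
    obtain ⟨s, hs, hv⟩ := walk_allvals e h y he hh hy j1 hjeven hbounce (Nat.find hx2)
    have : walkF e h y s = w2 := by rw [← hv]; exact Nat.find_spec hx2
    exact le_trans (Nat.find_min' hx2 this) hs
  have hle1 := key z1 z2 ex1 ex2 e1 e2
  have hle2 := key z2 z1 ex2 ex1 e2 e1
  have : Nat.find ex1 = Nat.find ex2 := le_antisymm hle2 hle1
  rw [← Nat.find_spec ex1, ← Nat.find_spec ex2, this]


lemma epsNK_oneTwo (n k : ℕ) : IsOneTwo (epsNK n k) := by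
  intro x
  by_cases hx : x.val < k
  · have hset : {y | (epsNK n k).r x y} = {x} := by
      ext y
      constructor
      · rintro (h | ⟨h1, h2, h3⟩)
        · exact h.symm
        · omega
      · intro h
        rw [Set.mem_singleton_iff] at h
        rw [h]
        exact Set.mem_setOf.mpr ((epsNK n k).refl x)
    rw [hset, Set.ncard_singleton]
    omega
  · push_neg at hx
    have hcard : ({y | (epsNK n k).r x y}).ncard
        = (Fin.val '' {y | (epsNK n k).r x y}).ncard :=
      (Set.ncard_image_of_injective _ Fin.val_injective).symm
    rw [hcard]
    have hsub : Fin.val '' {y | (epsNK n k).r x y}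
        ⊆ ({k + 2*((x.val - k)/2), k + 2*((x.val - k)/2) + 1} : Set ℕ) := by
      rintro z ⟨y, hy, rfl⟩
      rcases hy with rfl | ⟨h1, h2, h3⟩
      · simp only [Set.mem_insert_iff, Set.mem_singleton_iff]
        omega
      · simp only [Set.mem_insert_iff, Set.mem_singleton_iff]
        omega
    refine le_trans (Set.ncard_le_ncard hsub (Set.toFinite _)) ?_
    refine le_trans (Set.ncard_insert_le _ _) ?_
    simp

lemma epsNK_singleton {n k : ℕ} {x : Fin n} (hx : x.val < k) :
    ∀ w, (epsNK n k).r x w → w = x := by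
  rintro w (h | ⟨h1, h2, h3⟩)
  · exact h.symm
  · omega

lemma epsNK_mono {n k : ℕ} : ∀ a b : Fin n, (epsNK n (k+2)).r a b → (epsNK n k).r a b := by
  rintro a b (rfl | ⟨h1, h2, h3⟩)
  · exact Or.inl rfl
  · exact Or.inr ⟨by omega, by omega, by omega⟩

lemma join_rigid {n : ℕ} (ε η : Setoid (Fin n)) (v : Fin n)
    (hεv : ∀ w, ε.r v w → w = v) (hηv : ∀ w, η.r v w → w = v) :
    ∀ z, (ε ⊔ η).r v z → z = v := by
  intro z hz
  have hz' := (sup_r_iff ε η v z).mp hz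
  clear hz
  induction hz' with
  | refl => rfl
  | tail _ hst ih =>
      subst ih
      rcases hst with h | h
      · exact hεv _ h
      · exact hηv _ h

lemma claimA {n : ℕ} {ε η : Setoid (Fin n)} (hε : IsOneTwo ε) (hη : IsOneTwo η) (y : Fin n)
    (hy : ∀ w, η.r y w → w = y) {z1 z2 : Fin n}
    (hz1 : (ε ⊔ η).r y z1) (hz2 : (ε ⊔ η).r y z2)
    (he1 : ∀ w, ε.r z1 w → w = z1) (he2 : ∀ w, ε.r z2 w → w = z2) : z1 = z2 := by
  have hstep : ∀ a b : Fin n, (ε.r a b ∨ η.r a b) →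
      (b = a ∨ b = part ε a ∨ b = part η a) := by
    rintro a b (h | h)
    · rcases rel_part hε h with h' | h'
      · exact Or.inl h'
      · exact Or.inr (Or.inl h')
    · rcases rel_part hη h with h' | h'
      · exact Or.inl h'
      · exact Or.inr (Or.inr h')
  have h1' := Relation.ReflTransGen.mono hstep y z1 ((sup_r_iff ε η y z1).mp hz1)
  have h2' := Relation.ReflTransGen.mono hstep y z2 ((sup_r_iff ε η y z2).mp hz2)
  exact invol_unique (part ε) (part η) (part_part hε) (part_part hη) y
    (hy _ (part_rel η y)) z1 z2 h1' h2'
    (he1 _ (part_rel ε z1)) (he2 _ (part_rel ε z2))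

lemma rank_eq_iff {n k r : ℕ} (hrk : r ≤ k) (η : Setoid (Fin n)) (X : Set (Fin n))
    (hPB : IsPBPair η X) :
    joinRank (epsNK n k) (domSet n r) η X = X.ncard ↔
      ∀ y ∈ X, ∃ x : Fin n, x.val < r ∧ (epsNK n k ⊔ η).r x y := by
  set ε := epsNK n k with hεdef
  set P := {p : Fin n × Fin n | p.1 ∈ domSet n r ∧ p.2 ∈ X ∧ (ε ⊔ η).r p.1 p.2} with hPdef
  have hrank : joinRank (epsNK n k) (domSet n r) η X = P.ncard := rfl
  have hinj : Set.InjOn Prod.snd P := by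
    intro p hp p' hp' hsnd
    have hjoin2 : (ε ⊔ η).r p.2 p'.1 := by
      rw [hsnd]
      exact (ε ⊔ η).symm hp'.2.2
    have h11 := claimA (epsNK_oneTwo n k) hPB.1 p.2 (fun w hw => hPB.2 p.2 hp.2.1 w hw)
      ((ε ⊔ η).symm hp.2.2) hjoin2
      (epsNK_singleton (lt_of_lt_of_le hp.1 hrk))
      (epsNK_singleton (lt_of_lt_of_le hp'.1 hrk))
    exact Prod.ext h11 hsnd
  have hmaps : Prod.snd '' P ⊆ X := by
    rintro _ ⟨p, hp, rfl⟩
    exact hp.2.1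
  constructor
  · intro hq y hyX
    have himg : (Prod.snd '' P).ncard = X.ncard := by
      rw [Set.ncard_image_of_injOn hinj, ← hrank, hq]
    have heq := Set.eq_of_subset_of_ncard_le hmaps (by rw [himg]) (Set.toFinite _)
    rw [← heq] at hyX
    obtain ⟨p, hp, rfl⟩ := hyX
    exact ⟨p.1, hp.1, hp.2.2⟩
  · intro hx
    have himg2 : Prod.snd '' P = X := by
      refine subset_antisymm hmaps (fun y hy => ?_)
      obtain ⟨x, hxr, hxy⟩ := hx y hy
      exact ⟨(x, y), ⟨hxr, hy, hxy⟩, rfl⟩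
    rw [hrank, ← Set.ncard_image_of_injOn hinj, himg2]

lemma join_mono {n k : ℕ} (η : Setoid (Fin n)) :
    ∀ a b : Fin n, (epsNK n (k+2) ⊔ η).r a b → (epsNK n k ⊔ η).r a b := by
  intro a b hab
  exact (sup_r_iff _ η a b).mpr
    (Relation.ReflTransGen.mono (fun u v (h : (epsNK n (k+2)).r u v ∨ η.r u v) => h.imp (epsNK_mono u v) id) a b ((sup_r_iff _ η a b).mp hab))


/-- The example 1-2-equivalence with single doubleton `{0, k+1}`. -/
def etaEx (n k : ℕ) : Setoid (Fin n) where
  r x y := x = y ∨ (x.val = 0 ∧ y.val = k+1) ∨ (x.val = k+1 ∧ y.val = 0)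
  iseqv := by
    constructor
    · exact fun x => Or.inl rfl
    · rintro x y (rfl | ⟨h1, h2⟩ | ⟨h1, h2⟩)
      · exact Or.inl rfl
      · exact Or.inr (Or.inr ⟨h2, h1⟩)
      · exact Or.inr (Or.inl ⟨h2, h1⟩)
    · rintro x y z (rfl | ⟨h1, h2⟩ | ⟨h1, h2⟩) hyz
      · exact hyz
      · rcases hyz with rfl | ⟨h3, h4⟩ | ⟨h3, h4⟩
        · exact Or.inr (Or.inl ⟨h1, h2⟩)
        · exact absurd (h2.symm.trans h3) (by omega)
        · exact Or.inl (Fin.ext (by omega))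
      · rcases hyz with rfl | ⟨h3, h4⟩ | ⟨h3, h4⟩
        · exact Or.inr (Or.inr ⟨h1, h2⟩)
        · exact Or.inl (Fin.ext (by omega))
        · exact absurd (h2.symm.trans h3) (by omega)

lemma etaEx_oneTwo (n k : ℕ) : IsOneTwo (etaEx n k) := by
  intro x
  by_cases hx : x.val = 0 ∨ x.val = k+1
  · have hcard : ({y | (etaEx n k).r x y}).ncard
        = (Fin.val '' {y | (etaEx n k).r x y}).ncard :=
      (Set.ncard_image_of_injective _ Fin.val_injective).symm
    rw [hcard]
    have hsub : Fin.val '' {y | (etaEx n k).r x y} ⊆ ({0, k+1} : Set ℕ) := by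
      rintro z ⟨y, hy, rfl⟩
      rcases hy with rfl | ⟨h1, h2⟩ | ⟨h1, h2⟩ <;>
        simp only [Set.mem_insert_iff, Set.mem_singleton_iff] <;> omega
    refine le_trans (Set.ncard_le_ncard hsub (Set.toFinite _)) ?_
    refine le_trans (Set.ncard_insert_le _ _) ?_
    simp
  · push_neg at hx
    have hset : {y | (etaEx n k).r x y} = {x} := by
      ext y
      constructor
      · rintro (h | ⟨h1, h2⟩ | ⟨h1, h2⟩)
        · exact h.symm
        · exact absurd h1 hx.1
        · exact absurd h1 hx.2
      · intro h
        rw [Set.mem_singleton_iff] at h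
        rw [h]
        exact Set.mem_setOf.mpr ((etaEx n k).refl x)
    rw [hset, Set.ncard_singleton]
    omega

lemma etaEx_singleton {n k : ℕ} {x : Fin n} (h0 : x.val ≠ 0) (h1 : x.val ≠ k+1) :
    ∀ y, (etaEx n k).r x y → y = x := by
  rintro y (h | ⟨ha, hb⟩ | ⟨ha, hb⟩)
  · exact h.symm
  · exact absurd ha h0
  · exact absurd ha h1


def gEx (n k q : ℕ) (hkn : k < n) (hqn : q ≤ n) : Fin q → Fin n :=
  fun i => if i.val = 0 then ⟨k, hkn⟩ else ⟨i.val, lt_of_lt_of_le i.isLt hqn⟩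

lemma gEx_val (n k q : ℕ) (hkn : k < n) (hqn : q ≤ n) (i : Fin q) :
    (gEx n k q hkn hqn i).val = if i.val = 0 then k else i.val := by
  unfold gEx
  split
  · rfl
  · rfl

lemma gEx_inj (n k q : ℕ) (hkn : k < n) (hqn : q ≤ n) (hqk : q ≤ k) :
    Function.Injective (gEx n k q hkn hqn) := by
  intro i j hij
  have hv := congrArg Fin.val hij
  rw [gEx_val, gEx_val] at hv
  have hi := i.isLt
  have hj := j.isLt
  apply Fin.ext
  split_ifs at hv <;> omega

lemma gEx_range (n k q : ℕ) (hkn : k < n) (hqn : q ≤ n) (hq : 1 ≤ q) (hqk : q ≤ k) :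
    Set.range (gEx n k q hkn hqn) = {x : Fin n | (1 ≤ x.val ∧ x.val < q) ∨ x.val = k} := by
  ext x
  constructor
  · rintro ⟨i, rfl⟩
    have hi := i.isLt
    rw [Set.mem_setOf_eq, gEx_val]
    by_cases h : i.val = 0
    · rw [if_pos h]
      exact Or.inr rfl
    · rw [if_neg h]
      exact Or.inl ⟨by omega, hi⟩
  · intro hx
    rw [Set.mem_setOf_eq] at hx
    rcases hx with ⟨h1, h2⟩ | h1
    · refine ⟨⟨x.val, h2⟩, Fin.ext ?_⟩
      rw [gEx_val]
      exact if_neg (show ¬ (x.val = 0) from by omega)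
    · refine ⟨⟨0, by omega⟩, Fin.ext ?_⟩
      rw [gEx_val, if_pos rfl]
      exact h1.symm

/-- If `n ≥ k ≥ r ≥ q ≥ 1`, `n ≡ k (mod 2)` and `n ≥ k + 2`, then
`μ(n,k,r,q) > μ(n,k+2,r,q)`. -/
theorem mu_strict_antitone_in_k (n k r q : ℕ) (hq : 1 ≤ q) (hqr : q ≤ r) (hrk : r ≤ k)
    (hkn : k ≤ n) (hpar : n % 2 = k % 2) (hk2 : k + 2 ≤ n) :
    mu n (k + 2) r q < mu n k r q := by
  haveI : Finite (Setoid (Fin n)) := setoid_finite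
  rw [mu, mu, if_pos ⟨hk2, by omega, by omega⟩, if_pos ⟨hkn, hrk, hpar⟩]
  set S2 := {p : Setoid (Fin n) × Set (Fin n) |
      IsPBPair p.1 p.2 ∧ p.2.ncard = q ∧
      joinRank (epsNK n (k+2)) (domSet n r) p.1 p.2 = q} with hS2
  set S1 := {p : Setoid (Fin n) × Set (Fin n) |
      IsPBPair p.1 p.2 ∧ p.2.ncard = q ∧
      joinRank (epsNK n k) (domSet n r) p.1 p.2 = q} with hS1
  have hsub : S2 ⊆ S1 := by
    rintro p ⟨hPB, hX, hrank⟩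
    refine ⟨hPB, hX, ?_⟩
    have hchar := (rank_eq_iff (show r ≤ k + 2 by omega) p.1 p.2 hPB).mp
      (hrank.trans hX.symm)
    have hchar' : ∀ y ∈ p.2, ∃ x : Fin n, x.val < r ∧ (epsNK n k ⊔ p.1).r x y := by
      intro y hy
      obtain ⟨x, hxr, hxy⟩ := hchar y hy
      exact ⟨x, hxr, join_mono p.1 x y hxy⟩
    have := (rank_eq_iff hrk p.1 p.2 hPB).mpr hchar'
    rw [this, hX]
  refine Set.ncard_lt_ncard ?_ (Set.toFinite _)
  rw [Set.ssubset_iff_of_subset hsub]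
  -- the witness pair
  set X0 : Set (Fin n) := {x : Fin n | (1 ≤ x.val ∧ x.val < q) ∨ x.val = k} with hX0
  have hkn' : k < n := by omega
  have hk1n : k + 1 < n := by omega
  have h0n : 0 < n := by omega
  -- cardinality of X0
  have hX0card : X0.ncard = q := by
    rw [hX0, ← gEx_range n k q hkn' (by omega) hq (by omega),
      ← Nat.card_coe_set_eq, Nat.card_range_of_injective (gEx_inj n k q hkn' (by omega) (by omega)),
      Nat.card_eq_fintype_card, Fintype.card_fin]
  -- X0 consists of etaEx-singletons
  have hX0sing : ∀ x ∈ X0, ∀ y : Fin n, (etaEx n k).r x y → y = x := by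
    intro x hx
    rcases hx with ⟨h1, h2⟩ | h1
    · exact etaEx_singleton (by omega) (by omega)
    · exact etaEx_singleton (by omega) (by omega)
  have hPB0 : IsPBPair (etaEx n k) X0 := ⟨etaEx_oneTwo n k, hX0sing⟩
  refine ⟨(etaEx n k, X0), ⟨hPB0, hX0card, ?_⟩, ?_⟩
  · -- joinRank with eps_{n,k} is q
    have hchar : ∀ y ∈ X0, ∃ x : Fin n, x.val < r ∧ (epsNK n k ⊔ etaEx n k).r x y := by
      intro y hy
      rcases hy with ⟨h1, h2⟩ | h1
      · exact ⟨y, by omega, (epsNK n k ⊔ etaEx n k).refl y⟩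
      · refine ⟨⟨0, h0n⟩, (by omega : (0:ℕ) < r), ?_⟩
        have hstep1 : (epsNK n k ⊔ etaEx n k).r ⟨0, h0n⟩ ⟨k+1, hk1n⟩ :=
          Setoid.le_def.mp le_sup_right (Or.inr (Or.inl ⟨rfl, rfl⟩))
        have hstep2 : (epsNK n k ⊔ etaEx n k).r ⟨k+1, hk1n⟩ y :=
          Setoid.le_def.mp le_sup_left
            (Or.inr (show k ≤ k+1 ∧ k ≤ y.val ∧ (k+1-k)/2 = (y.val-k)/2 from by omega))
        exact (epsNK n k ⊔ etaEx n k).trans hstep1 hstep2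
    have := (rank_eq_iff hrk (etaEx n k) X0 hPB0).mpr hchar
    rw [this, hX0card]
  · -- not in S2
    rintro ⟨-, hXq, hrank2⟩
    have hchar := (rank_eq_iff (show r ≤ k + 2 by omega) (etaEx n k) X0 hPB0).mp
      (hrank2.trans hXq.symm)
    obtain ⟨x, hxr, hxy⟩ := hchar ⟨k, hkn'⟩ (Or.inr rfl)
    have hrig := join_rigid (epsNK n (k+2)) (etaEx n k) ⟨k, hkn'⟩
      (epsNK_singleton (show k < k + 2 from by omega))
      (etaEx_singleton (show k ≠ 0 from by omega) (show k ≠ k+1 from by omega))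
    have hxk := hrig x ((epsNK n (k+2) ⊔ etaEx n k).symm hxy)
    rw [hxk] at hxr
    have hklt : k < r := hxr
    omega
end

section
/- Every domain path in the join of two PB-pairs uses no element lying in a non-domain singleton class of either equivalence. Precisely: let (ε₁,X₁), (ε₂,X₂) be PB-pairs on a finite set T, and let x ∈ X₁, y ∈ X₂ lie in the same class of ε₁ ∨ ε₂. Then every element w of that (ε₁∨ε₂)-class other than x and y lies in a non-singleton class of ε₁ and in a non-singleton class of ε₂. -/
section DomainPathAux

open Relation
open scoped Classical

set_option linter.unusedSectionVars false

variable {T : Type*}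

lemma three_of_ncard_le_two [Finite T] {S : Set T} (h : S.ncard ≤ 2) {a b c : T}
    (ha : a ∈ S) (hb : b ∈ S) (hc : c ∈ S) : a = b ∨ a = c ∨ b = c := by
  by_contra hcon
  push_neg at hcon
  have hsub : ({a, b, c} : Set T) ⊆ S := by
    intro z hz
    simp only [Set.mem_insert_iff, Set.mem_singleton_iff] at hz
    rcases hz with rfl | rfl | rfl <;> assumption
  have h3 : ({a, b, c} : Set T).ncard = 3 := by
    rw [Set.ncard_insert_of_notMem (by simp [hcon.1, hcon.2.1]),
      Set.ncard_pair hcon.2.2]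
  have := Set.ncard_le_ncard hsub (Set.toFinite S)
  omega

/-- The partner of `a`: the other element of its class if it exists, else `a`. -/
noncomputable def partner (ε : Setoid T) (a : T) : T :=
  if h : ∃ b, b ≠ a ∧ ε.r a b then h.choose else a

lemma partner_rel (ε : Setoid T) (a : T) : ε.r a (partner ε a) := by
  unfold partner
  split
  · next h => exact h.choose_spec.2
  · exact ε.refl a

lemma rel_partner_eq [Finite T] (ε : Setoid T) (h12 : IsOneTwo ε) {a b : T}
    (hab : ε.r a b) (hne : b ≠ a) : b = partner ε a := by
  have hex : ∃ c, c ≠ a ∧ ε.r a c := ⟨b, hne, hab⟩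
  have hp : partner ε a ≠ a ∧ ε.r a (partner ε a) := by
    unfold partner
    rw [dif_pos hex]
    exact hex.choose_spec
  have h3 := three_of_ncard_le_two (h12 a) (show a ∈ {y | ε.r a y} from ε.refl a)
    (show b ∈ {y | ε.r a y} from hab) (show partner ε a ∈ {y | ε.r a y} from hp.2)
  rcases h3 with h | h | h
  · exact absurd h.symm hne
  · exact absurd h.symm hp.1
  · exact h

lemma partner_partner [Finite T] (ε : Setoid T) (h12 : IsOneTwo ε) (a : T) :
    partner ε (partner ε a) = a := by
  by_cases h : partner ε a = a
  · rw [h, h]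
  · exact (rel_partner_eq ε h12 (ε.symm (partner_rel ε a)) (Ne.symm h)).symm

lemma partner_eq_self {ε : Setoid T} {X : Set T} (h : IsPBPair ε X) {a : T}
    (ha : a ∈ X) : partner ε a = a :=
  h.2 a ha _ (partner_rel ε a)

lemma rel_cases [Finite T] (ε : Setoid T) (h12 : IsOneTwo ε) {a b : T}
    (hab : ε.r a b) : b = a ∨ b = partner ε a := by
  by_cases h : b = a
  · exact Or.inl h
  · exact Or.inr (rel_partner_eq ε h12 hab h)

/-- The alternating step function: even steps use `ε₂`, odd steps use `ε₁`. -/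
noncomputable def altF (ε₁ ε₂ : Setoid T) (n : ℕ) : T → T :=
  if n % 2 = 0 then partner ε₂ else partner ε₁

/-- The alternating path starting at `x`. -/
noncomputable def altSeq (ε₁ ε₂ : Setoid T) (x : T) : ℕ → T
  | 0 => x
  | n + 1 => altF ε₁ ε₂ n (altSeq ε₁ ε₂ x n)

variable [Finite T] {ε₁ ε₂ : Setoid T}

lemma altF_invol (h1 : IsOneTwo ε₁) (h2 : IsOneTwo ε₂) (n : ℕ) (t : T) :
    altF ε₁ ε₂ n (altF ε₁ ε₂ n t) = t := by
  unfold altF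
  by_cases h : n % 2 = 0 <;>
    simp [h, partner_partner _ h1, partner_partner _ h2]

lemma altF_congr {m n : ℕ} (h : m % 2 = n % 2) : altF ε₁ ε₂ m = (altF ε₁ ε₂ n : T → T) := by
  unfold altF
  rw [h]

lemma altSeq_reach (x : T) : ∀ n, (ε₁ ⊔ ε₂).r x (altSeq ε₁ ε₂ x n) := by
  intro n
  induction n with
  | zero => exact (ε₁ ⊔ ε₂).refl x
  | succ n ih =>
      refine (ε₁ ⊔ ε₂).trans ih ?_
      show (ε₁ ⊔ ε₂).r (altSeq ε₁ ε₂ x n) (altF ε₁ ε₂ n (altSeq ε₁ ε₂ x n))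
      unfold altF
      by_cases h : n % 2 = 0
      · rw [if_pos h]
        exact Setoid.le_def.mp le_sup_right (partner_rel ε₂ _)
      · rw [if_neg h]
        exact Setoid.le_def.mp le_sup_left (partner_rel ε₁ _)

lemma altSeq_closed₂ (h2 : IsOneTwo ε₂) (x : T) (n : ℕ) :
    ∃ k, altSeq ε₁ ε₂ x k = partner ε₂ (altSeq ε₁ ε₂ x n) := by
  rcases Nat.even_or_odd n with he | ho
  · refine ⟨n + 1, ?_⟩
    have hn : n % 2 = 0 := Nat.even_iff.mp he
    show altF ε₁ ε₂ n (altSeq ε₁ ε₂ x n) = _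
    unfold altF
    rw [if_pos hn]
  · have hn : n % 2 = 1 := Nat.odd_iff.mp ho
    obtain ⟨m, rfl⟩ : ∃ m, n = m + 1 := ⟨n - 1, by omega⟩
    refine ⟨m, ?_⟩
    have hm : m % 2 = 0 := by omega
    have hstep : altSeq ε₁ ε₂ x (m + 1) = partner ε₂ (altSeq ε₁ ε₂ x m) := by
      show altF ε₁ ε₂ m (altSeq ε₁ ε₂ x m) = _
      unfold altF
      rw [if_pos hm]
    rw [hstep, partner_partner _ h2]

lemma altSeq_closed₁ (h1 : IsOneTwo ε₁) {x : T} (hx : partner ε₁ x = x) (n : ℕ) :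
    ∃ k, altSeq ε₁ ε₂ x k = partner ε₁ (altSeq ε₁ ε₂ x n) := by
  rcases Nat.even_or_odd n with he | ho
  · have hn : n % 2 = 0 := Nat.even_iff.mp he
    rcases Nat.eq_zero_or_pos n with rfl | hpos
    · exact ⟨0, by simp [altSeq, hx]⟩
    · obtain ⟨m, rfl⟩ : ∃ m, n = m + 1 := ⟨n - 1, by omega⟩
      refine ⟨m, ?_⟩
      have hm : m % 2 = 1 := by omega
      have hstep : altSeq ε₁ ε₂ x (m + 1) = partner ε₁ (altSeq ε₁ ε₂ x m) := by
        show altF ε₁ ε₂ m (altSeq ε₁ ε₂ x m) = _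
        unfold altF
        rw [if_neg (by omega)]
      rw [hstep, partner_partner _ h1]
  · refine ⟨n + 1, ?_⟩
    have hn : n % 2 = 1 := Nat.odd_iff.mp ho
    show altF ε₁ ε₂ n (altSeq ε₁ ε₂ x n) = _
    unfold altF
    rw [if_neg (by omega)]

lemma altSeq_orbit (h1 : IsOneTwo ε₁) (h2 : IsOneTwo ε₂) {x : T}
    (hx : partner ε₁ x = x) {b : T} (hb : (ε₁ ⊔ ε₂).r x b) :
    ∃ n, altSeq ε₁ ε₂ x n = b := by
  rw [Setoid.sup_eq_eqvGen] at hb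
  have hb' : EqvGen (fun a b => ε₁.r a b ∨ ε₂.r a b) x b := hb
  have main : ∀ a c, EqvGen (fun a b => ε₁.r a b ∨ ε₂.r a b) a c →
      ((∃ n, altSeq ε₁ ε₂ x n = a) ↔ (∃ n, altSeq ε₁ ε₂ x n = c)) := by
    intro a c h
    induction h with
    | rel a c h =>
        have step : ∀ p q : T, (ε₁.r p q ∨ ε₂.r p q) →
            (∃ n, altSeq ε₁ ε₂ x n = p) → ∃ n, altSeq ε₁ ε₂ x n = q := by
          rintro p q hpq ⟨n, rfl⟩
          rcases hpq with hr | hr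
          · rcases rel_cases ε₁ h1 hr with rfl | rfl
            · exact ⟨n, rfl⟩
            · exact altSeq_closed₁ h1 hx n
          · rcases rel_cases ε₂ h2 hr with rfl | rfl
            · exact ⟨n, rfl⟩
            · exact altSeq_closed₂ h2 x n
        have hsym : ε₁.r c a ∨ ε₂.r c a := h.imp (fun hh => ε₁.symm hh) (fun hh => ε₂.symm hh)
        exact ⟨step a c h, step c a hsym⟩
    | refl a => exact Iff.rfl
    | symm a c h ih => exact ih.symm
    | trans a c d h1' h2' ih1 ih2 => exact ih1.trans ih2
  exact (main x b hb').mp ⟨0, rfl⟩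

lemma altSeq_reflect (h1 : IsOneTwo ε₁) (h2 : IsOneTwo ε₂) (x : T) {e : ℕ}
    (he : altSeq ε₁ ε₂ x (e + 1) = altSeq ε₁ ε₂ x e) :
    ∀ k, k ≤ e → altSeq ε₁ ε₂ x (e + 1 + k) = altSeq ε₁ ε₂ x (e - k) := by
  intro k
  induction k with
  | zero => intro _; simpa using he
  | succ k ih =>
      intro hk
      have ihk := ih (by omega)
      have h1' : altSeq ε₁ ε₂ x (e + 1 + (k + 1)) =
          altF ε₁ ε₂ (e + 1 + k) (altSeq ε₁ ε₂ x (e + 1 + k)) := rfl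
      have h2' : altSeq ε₁ ε₂ x (e - k) =
          altF ε₁ ε₂ (e - (k + 1)) (altSeq ε₁ ε₂ x (e - (k + 1))) := by
        have : e - k = (e - (k + 1)) + 1 := by omega
        rw [this]
        rfl
      have hcg : altF ε₁ ε₂ (e + 1 + k) = (altF ε₁ ε₂ (e - (k + 1)) : T → T) :=
        altF_congr (by omega)
      rw [h1', ihk, h2', hcg, altF_invol h1 h2]

lemma altSeq_period (h1 : IsOneTwo ε₁) (h2 : IsOneTwo ε₂) {x : T}
    (hx : partner ε₁ x = x) {e : ℕ}
    (he : altSeq ε₁ ε₂ x (e + 1) = altSeq ε₁ ε₂ x e) :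
    ∀ n, altSeq ε₁ ε₂ x (2 * e + 2 + n) = altSeq ε₁ ε₂ x n := by
  have h2e1 : altSeq ε₁ ε₂ x (2 * e + 1) = x := by
    have := altSeq_reflect h1 h2 x he e le_rfl
    simpa [show e + 1 + e = 2 * e + 1 by omega, altSeq.eq_1] using this
  have h2e2 : altSeq ε₁ ε₂ x (2 * e + 2) = x := by
    have hstep : altSeq ε₁ ε₂ x (2 * e + 2) =
        altF ε₁ ε₂ (2 * e + 1) (altSeq ε₁ ε₂ x (2 * e + 1)) := rfl
    rw [hstep, h2e1]
    unfold altF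
    rw [if_neg (by omega)]
    exact hx
  intro n
  induction n with
  | zero => exact h2e2
  | succ n ih =>
      have hL : altSeq ε₁ ε₂ x (2 * e + 2 + (n + 1)) =
          altF ε₁ ε₂ (2 * e + 2 + n) (altSeq ε₁ ε₂ x (2 * e + 2 + n)) := rfl
      have hR : altSeq ε₁ ε₂ x (n + 1) = altF ε₁ ε₂ n (altSeq ε₁ ε₂ x n) := rfl
      rw [hL, ih, hR, altF_congr (show (2 * e + 2 + n) % 2 = n % 2 by omega)]

lemma altSeq_mod (h1 : IsOneTwo ε₁) (h2 : IsOneTwo ε₂) {x : T}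
    (hx : partner ε₁ x = x) {e : ℕ}
    (he : altSeq ε₁ ε₂ x (e + 1) = altSeq ε₁ ε₂ x e) (n : ℕ) :
    altSeq ε₁ ε₂ x n = altSeq ε₁ ε₂ x (n % (2 * e + 2)) := by
  obtain ⟨q, r, hr, rfl⟩ : ∃ q r, r < 2 * e + 2 ∧ n = (2 * e + 2) * q + r :=
    ⟨n / (2 * e + 2), n % (2 * e + 2), Nat.mod_lt _ (by omega), (Nat.div_add_mod _ _).symm⟩
  have hmod : ((2 * e + 2) * q + r) % (2 * e + 2) = r := by
    rw [Nat.mul_add_mod]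
    exact Nat.mod_eq_of_lt hr
  rw [hmod]
  induction q with
  | zero => simp
  | succ q ih =>
      have : (2 * e + 2) * (q + 1) + r = 2 * e + 2 + ((2 * e + 2) * q + r) := by ring
      rw [this, altSeq_period h1 h2 hx he]
      exact ih (by rw [Nat.mul_add_mod]; exact Nat.mod_eq_of_lt hr)

/-- Key lemma: an interior point of a domain path cannot have a singleton
`ε₁`-class. -/
lemma key_lemma {X₁ X₂ : Set T}
    (h₁ : IsPBPair ε₁ X₁) (h₂ : IsPBPair ε₂ X₂)
    {x y w : T} (hx : x ∈ X₁) (hy : y ∈ X₂)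
    (hxy : (ε₁ ⊔ ε₂).r x y) (hxw : (ε₁ ⊔ ε₂).r x w)
    (hwx : w ≠ x) (hwy : w ≠ y)
    (hws : partner ε₁ w = w) : False := by
  classical
  obtain ⟨h1, _⟩ := id h₁
  obtain ⟨h2, _⟩ := id h₂
  have hfx : partner ε₁ x = x := partner_eq_self h₁ hx
  have hfy : partner ε₂ y = y := partner_eq_self h₂ hy
  -- w is in the orbit; take the least index.
  obtain ⟨m₀, hm₀⟩ := altSeq_orbit h1 h2 hfx hxw
  have hexm : ∃ m, altSeq ε₁ ε₂ x m = w := ⟨m₀, hm₀⟩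
  obtain ⟨m, hum, hmin⟩ : ∃ m, altSeq ε₁ ε₂ x m = w ∧ ∀ k < m, altSeq ε₁ ε₂ x k ≠ w :=
    ⟨Nat.find hexm, Nat.find_spec hexm, fun k hk => Nat.find_min hexm hk⟩
  have hm1 : 1 ≤ m := by
    rcases Nat.eq_zero_or_pos m with h0 | h0
    · exfalso
      rw [h0] at hum
      exact hwx hum.symm
    · exact h0
  -- m is odd, giving a reflection at m
  have hmodd : m % 2 = 1 := by
    by_contra hpar
    have hpar0 : m % 2 = 0 := by omega
    obtain ⟨p, rfl⟩ : ∃ p, m = p + 1 := ⟨m - 1, by omega⟩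
    have hstep : altSeq ε₁ ε₂ x (p + 1) = partner ε₁ (altSeq ε₁ ε₂ x p) := by
      show altF ε₁ ε₂ p (altSeq ε₁ ε₂ x p) = _
      unfold altF
      rw [if_neg (by omega)]
    have : altSeq ε₁ ε₂ x p = w := by
      rw [← hws, ← hum, hstep, partner_partner _ h1]
    exact hmin p (by omega) this
  have hreflm : altSeq ε₁ ε₂ x (m + 1) = altSeq ε₁ ε₂ x m := by
    have hstep : altSeq ε₁ ε₂ x (m + 1) = partner ε₁ (altSeq ε₁ ε₂ x m) := by
      show altF ε₁ ε₂ m (altSeq ε₁ ε₂ x m) = _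
      unfold altF
      rw [if_neg (by omega)]
    rw [hstep, hum, hws]
  -- y is in the orbit; reduce its index below m using periodicity and reflection
  obtain ⟨j₀, hj₀⟩ := altSeq_orbit h1 h2 hfx hxy
  have hj1 : ∃ j ≤ 2 * m + 1, altSeq ε₁ ε₂ x j = y := by
    have hlt := Nat.mod_lt j₀ (show 0 < 2 * m + 2 by omega)
    refine ⟨j₀ % (2 * m + 2), by omega, ?_⟩
    rw [← altSeq_mod h1 h2 hfx hreflm j₀]
    exact hj₀
  obtain ⟨j₁, hj₁le, hj₁⟩ := hj1
  have hj2 : ∃ j ≤ m, altSeq ε₁ ε₂ x j = y := by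
    rcases le_or_gt j₁ m with h | h
    · exact ⟨j₁, h, hj₁⟩
    · refine ⟨m - (j₁ - m - 1), by omega, ?_⟩
      have := altSeq_reflect h1 h2 x hreflm (j₁ - m - 1) (by omega)
      rw [show m + 1 + (j₁ - m - 1) = j₁ by omega] at this
      rw [← this]
      exact hj₁
  obtain ⟨j, hjle, hjy⟩ := hj2
  have hjm : j < m := by
    rcases Nat.lt_or_ge j m with h | h
    · exact h
    · exfalso
      have : j = m := by omega
      rw [this, hum] at hjy
      exact hwy hjy
  -- get a reflection at some e < m from the ε₂-fixed point y
  have hrefl₂ : ∃ e < m, altSeq ε₁ ε₂ x (e + 1) = altSeq ε₁ ε₂ x e := by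
    rcases Nat.even_or_odd j with he | ho
    · refine ⟨j, hjm, ?_⟩
      have hstep : altSeq ε₁ ε₂ x (j + 1) = partner ε₂ (altSeq ε₁ ε₂ x j) := by
        show altF ε₁ ε₂ j (altSeq ε₁ ε₂ x j) = _
        unfold altF
        rw [if_pos (Nat.even_iff.mp he)]
      rw [hstep, hjy, hfy]
    · have hjn : j % 2 = 1 := Nat.odd_iff.mp ho
      obtain ⟨p, rfl⟩ : ∃ p, j = p + 1 := ⟨j - 1, by omega⟩
      refine ⟨p, by omega, ?_⟩
      have hstep : altSeq ε₁ ε₂ x (p + 1) = partner ε₂ (altSeq ε₁ ε₂ x p) := by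
        show altF ε₁ ε₂ p (altSeq ε₁ ε₂ x p) = _
        unfold altF
        rw [if_pos (by omega)]
      have hpy : partner ε₂ (altSeq ε₁ ε₂ x p) = y := by
        rw [← hstep]
        exact hjy
      have hupy : altSeq ε₁ ε₂ x p = y := by
        have hc := congrArg (partner ε₂) hpy
        rw [partner_partner _ h2, hfy] at hc
        exact hc
      rw [hstep, hpy]
      exact hupy.symm
  obtain ⟨e, hem, hrefle⟩ := hrefl₂
  -- contradiction with minimality of m
  rcases le_or_gt m (2 * e + 1) with hcase | hcase
  · -- w appears at index 2e+1-m < m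
    have hk : m - e - 1 ≤ e := by omega
    have := altSeq_reflect h1 h2 x hrefle (m - e - 1) hk
    rw [show e + 1 + (m - e - 1) = m by omega] at this
    have hlt : e - (m - e - 1) < m := by omega
    exact hmin _ hlt (by rw [← this]; exact hum)
  · -- w appears at index m % (2e+2) < m
    have := altSeq_mod h1 h2 hfx hrefle m
    have hlt : m % (2 * e + 2) < m := by
      have : m % (2 * e + 2) < 2 * e + 2 := Nat.mod_lt _ (by omega)
      omega
    exact hmin _ hlt (by rw [← this]; exact hum)

end DomainPathAux

/-- Every element of a domain path of the join of two PB-pairs, other than its two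
endpoints, lies in a non-singleton class of each of the two equivalences. -/
theorem domain_path_interior_in_nonsingleton_classes {T : Type*} [Finite T]
    (ε₁ ε₂ : Setoid T) (X₁ X₂ : Set T)
    (h₁ : IsPBPair ε₁ X₁) (h₂ : IsPBPair ε₂ X₂)
    (x y : T) (hx : x ∈ X₁) (hy : y ∈ X₂) (hxy : (ε₁ ⊔ ε₂).r x y) :
    ∀ w : T, (ε₁ ⊔ ε₂).r x w → w ≠ x → w ≠ y →
      (∃ z : T, z ≠ w ∧ ε₁.r w z) ∧ (∃ z : T, z ≠ w ∧ ε₂.r w z) := by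
  
  intro w hxw hwnx hwny
  constructor
  · by_contra hno
    push_neg at hno
    have hws : partner ε₁ w = w := by
      by_contra hne
      exact hno _ hne (partner_rel ε₁ w)
    exact key_lemma h₁ h₂ hx hy hxy hxw hwnx hwny hws
  · by_contra hno
    push_neg at hno
    have hws : partner ε₂ w = w := by
      by_contra hne
      exact hno _ hne (partner_rel ε₂ w)
    have hcomm : ε₂ ⊔ ε₁ = ε₁ ⊔ ε₂ := sup_comm ε₂ ε₁
    refine key_lemma h₂ h₁ hy hx ?_ ?_ hwny hwnx hws
    · rw [hcomm]; exact (ε₁ ⊔ ε₂).symm hxy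
    · rw [hcomm]; exact (ε₁ ⊔ ε₂).trans ((ε₁ ⊔ ε₂).symm hxy) hxw
end
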